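/- Let T be a rooted label tree for m labels with nested label columns ẏ₁ ≤ ẏ₂ ≤ … ≤ ẏ_m coordinatewise in {0,1}ⁿ. Suppose an internal node v has two internal children v₁, v₂ with ‖ż_{v₁}‖₁ ≤ ‖ż_{v₂}‖₁. Moving v₁ to become a child of v₂ changes the total cost by −‖ż_v‖₁ + ‖ż_{v₂}‖₁ ≤ 0 (where ż labels denote ORs of leaf vectors below and the cost of a node is its Hamming weight times its degree). Hence there exists an optimal tree in which every node has at most one internal child. -/

import Mathlib

/-- A rooted tree with leaves labeled by `α`. -/
inductive RTree (α : Type) where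
  | leaf : α → RTree α
  | node : List (RTree α) → RTree α

namespace RTree

/-- The list of leaf labels of a tree. -/
def leaves {α : Type} : RTree α → List α
  | .leaf a => [a]
  | .node ts => (ts.attach.map (fun ⟨t, _⟩ => t.leaves)).flatten

/-- Depth of the tree: maximum number of edges on a root-to-leaf path. -/
def depth {α : Type} : RTree α → ℕ
  | .leaf _ => 0
  | .node ts => 1 + (ts.attach.map (fun ⟨t, _⟩ => t.depth)).foldr max 0

/-- Maximum degree (number of children) over all nodes. -/
def maxdeg {α : Type} : RTree α → ℕ
  | .leaf _ => 0
  | .node ts => max ts.length ((ts.attach.map (fun ⟨t, _⟩ => t.maxdeg)).foldr max 0)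

end RTree

/-- Hamming weight of a binary vector. -/
def hw {n : ℕ} (z : Fin n → Bool) : ℕ := (Finset.univ.filter (fun i => z i = true)).card

/-- Coordinatewise OR of a list of binary vectors. -/
def orv {n : ℕ} (ys : List (Fin n → Bool)) : Fin n → Bool := fun i => ys.any (fun y => y i)

/-- `∑_{v ∈ V(T)} ‖z_v‖₁ · deg(v)`, where `z_v` is the OR of the leaf labels below `v`
and `deg(v)` the number of children of `v` (0 for leaves). -/
def RTree.cost {n : ℕ} : RTree (Fin n → Bool) → ℕ
  | .leaf _ => 0
  | .node ts => hw (orv (RTree.leaves (.node ts))) * ts.length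
      + (ts.attach.map (fun ⟨t, _⟩ => t.cost)).sum

/-- Whether a tree is a single leaf. -/
def RTree.isLeaf {α : Type} : RTree α → Bool
  | .leaf _ => true
  | .node _ => false

/-- Every node of the tree has at most one internal (non-leaf) child. -/
def RTree.atMostOneInternalChild {α : Type} : RTree α → Prop
  | .leaf _ => True
  | .node ts => (ts.countP (fun c => !c.isLeaf)) ≤ 1 ∧ ∀ c ∈ ts, c.atMostOneInternalChild
-- ===== auxiliary development =====

def vle {n : ℕ} (a b : Fin n → Bool) : Prop := ∀ i, a i = true → b i = true

def ChainL {n : ℕ} (L : List (Fin n → Bool)) : Prop := ∀ a ∈ L, ∀ b ∈ L, vle a b ∨ vle b a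

namespace NestedAux

open RTree

variable {n : ℕ}

lemma vle_refl (a : Fin n → Bool) : vle a a := fun _ h => h

lemma hw_mono {a b : Fin n → Bool} (h : vle a b) : hw a ≤ hw b := by
  apply Finset.card_le_card
  intro i hi
  simp only [Finset.mem_filter] at *
  exact ⟨hi.1, h i hi.2⟩

lemma eq_of_vle_of_hw_le {a b : Fin n → Bool} (h : vle b a) (hh : hw a ≤ hw b) : a = b := by
  have hsub : Finset.univ.filter (fun i => b i = true) ⊆ Finset.univ.filter (fun i => a i = true) := by
    intro i hi; simp only [Finset.mem_filter] at *; exact ⟨hi.1, h i hi.2⟩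
  have heq := Finset.eq_of_subset_of_card_le hsub hh
  funext i
  have hiff : (i ∈ Finset.univ.filter (fun i => b i = true)) ↔
      (i ∈ Finset.univ.filter (fun i => a i = true)) := by rw [heq]
  simp only [Finset.mem_filter, Finset.mem_univ, true_and] at hiff
  cases hb : b i <;> cases ha : a i <;> simp_all

lemma vle_orv_of_mem {L : List (Fin n → Bool)} {y : Fin n → Bool} (h : y ∈ L) : vle y (orv L) := by
  intro i hi
  simp only [orv, List.any_eq_true]
  exact ⟨y, h, hi⟩

lemma orv_vle {L : List (Fin n → Bool)} {b : Fin n → Bool} (h : ∀ y ∈ L, vle y b) :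
    vle (orv L) b := by
  intro i hi
  simp only [orv, List.any_eq_true] at hi
  obtain ⟨y, hy, hyi⟩ := hi
  exact h y hy i hyi

lemma orv_congr_mem {L L' : List (Fin n → Bool)} (h : ∀ y, y ∈ L ↔ y ∈ L') : orv L = orv L' := by
  funext i
  simp only [orv]
  cases hb : L'.any (fun y => y i) <;> simp only [List.any_eq_true, List.any_eq_false] at *
  · intro y hy; exact hb y ((h y).1 hy)
  · obtain ⟨y, hy, hyi⟩ := hb; exact ⟨y, (h y).2 hy, hyi⟩

lemma orv_perm {L L' : List (Fin n → Bool)} (h : L.Perm L') : orv L = orv L' :=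
  orv_congr_mem (fun _ => h.mem_iff)

lemma orv_append (L₁ L₂ : List (Fin n → Bool)) :
    orv (L₁ ++ L₂) = fun i => orv L₁ i || orv L₂ i := by
  funext i; simp [orv]

lemma orv_mono_subset {L L' : List (Fin n → Bool)} (h : ∀ y ∈ L', y ∈ L) :
    vle (orv L') (orv L) :=
  orv_vle (fun y hy => vle_orv_of_mem (h y hy))

lemma chain_subset {L L' : List (Fin n → Bool)} (h : ∀ y ∈ L', y ∈ L) (hc : ChainL L) :
    ChainL L' := fun a ha b hb => hc a (h a ha) b (h b hb)

lemma chain_orv_mem {L : List (Fin n → Bool)} (hc : ChainL L) (hne : L ≠ []) : orv L ∈ L := by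
  induction L with
  | nil => simp at hne
  | cons a L ih =>
    rcases eq_or_ne L [] with rfl | hL
    · have : orv [a] = a := by funext i; simp [orv]
      simp [this]
    · have hc' : ChainL L := chain_subset (fun y hy => List.mem_cons_of_mem _ hy) hc
      have hm := ih hc' hL
      have hcomp := hc a (by simp) (orv L) (List.mem_cons_of_mem _ hm)
      have hsplit : orv (a :: L) = fun i => a i || orv L i := by
        funext i; simp [orv]
      rcases hcomp with h | h
      · have : orv (a :: L) = orv L := by
          funext i; rw [hsplit]
          cases hai : a i
          · simp [hai]
          · simp [hai, h i hai]
        rw [this]; exact List.mem_cons_of_mem _ hm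
      · have : orv (a :: L) = a := by
          funext i; rw [hsplit]
          cases hoi : orv L i
          · simp [hoi]
          · simp [hoi, h i hoi]
        rw [this]; simp

lemma orv_comparable {L₁ L₂ : List (Fin n → Bool)} (hc : ChainL (L₁ ++ L₂)) :
    vle (orv L₁) (orv L₂) ∨ vle (orv L₂) (orv L₁) := by
  rcases eq_or_ne L₁ [] with rfl | h1
  · left; intro i hi; simp [orv] at hi
  rcases eq_or_ne L₂ [] with rfl | h2
  · right; intro i hi; simp [orv] at hi
  have m1 : orv L₁ ∈ L₁ :=
    chain_orv_mem (chain_subset (fun y hy => List.mem_append_left _ hy) hc) h1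
  have m2 : orv L₂ ∈ L₂ :=
    chain_orv_mem (chain_subset (fun y hy => List.mem_append_right _ hy) hc) h2
  exact hc _ (List.mem_append_left _ m1) _ (List.mem_append_right _ m2)

lemma vle_orv_of_hw_le {L₁ L₂ : List (Fin n → Bool)} (hc : ChainL (L₁ ++ L₂))
    (h : hw (orv L₁) ≤ hw (orv L₂)) : vle (orv L₁) (orv L₂) := by
  rcases orv_comparable hc with h' | h'
  · exact h'
  · rw [eq_of_vle_of_hw_le h' h]; exact vle_refl _

lemma orv_append_eq_right {L₁ L₂ : List (Fin n → Bool)} (h : vle (orv L₁) (orv L₂)) :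
    orv (L₁ ++ L₂) = orv L₂ := by
  funext i
  rw [orv_append]
  cases h1 : orv L₁ i
  · simp [h1]
  · simp [h1, h i h1]

-- tree lemmas

def rsize {α : Type} : RTree α → ℕ
  | .leaf _ => 1
  | .node ts => 1 + (ts.attach.map (fun ⟨t, _⟩ => rsize t)).sum

@[simp] lemma leaves_node {α : Type} (ts : List (RTree α)) :
    (RTree.node ts).leaves = (ts.map leaves).flatten := by
  simp [leaves]

@[simp] lemma leaves_leaf {α : Type} (a : α) : (RTree.leaf a).leaves = [a] := by
  simp [leaves]

@[simp] lemma rsize_node {α : Type} (ts : List (RTree α)) :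
    rsize (RTree.node ts) = 1 + (ts.map rsize).sum := by
  simp [rsize]

lemma cost_node (ts : List (RTree (Fin n → Bool))) :
    (RTree.node ts).cost = hw (orv ((ts.map leaves).flatten)) * ts.length
      + (ts.map cost).sum := by
  simp [cost]

@[simp] lemma cost_leaf (a : Fin n → Bool) : (RTree.leaf a).cost = 0 := by simp [RTree.cost]

@[simp] lemma isLeaf_leaf {α : Type} (a : α) : (RTree.leaf a).isLeaf = true := rfl
@[simp] lemma isLeaf_node {α : Type} (ts : List (RTree α)) : (RTree.node ts).isLeaf = false := rfl

lemma amo_node {α : Type} {ts : List (RTree α)} :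
    (RTree.node ts).atMostOneInternalChild ↔
      (ts.countP (fun c => !c.isLeaf) ≤ 1 ∧ ∀ c ∈ ts, c.atMostOneInternalChild) := by
  rw [RTree.atMostOneInternalChild]

lemma amo_leaf {α : Type} (a : α) : (RTree.leaf a).atMostOneInternalChild := by
  rw [RTree.atMostOneInternalChild]; trivial

lemma rsize_lt_of_mem {α : Type} {ts : List (RTree α)} {t : RTree α} (h : t ∈ ts) :
    rsize t < rsize (RTree.node ts) := by
  have : rsize t ≤ (ts.map rsize).sum := List.le_sum_of_mem (List.mem_map_of_mem (f := rsize) h)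
  simp only [rsize_node]; omega

lemma mem_flatten_leaves {α : Type} {ts : List (RTree α)} {t : RTree α} (ht : t ∈ ts)
    {y : α} (hy : y ∈ t.leaves) : y ∈ (ts.map leaves).flatten := by
  exact List.mem_flatten.2 ⟨t.leaves, List.mem_map_of_mem (f := leaves) ht, hy⟩

lemma flatten_perm_of_forall₂ {α : Type} {l l' : List (List α)}
    (h : List.Forall₂ List.Perm l l') : l.flatten.Perm l'.flatten := by
  induction h with
  | nil => rfl
  | cons h _ ih => exact h.append ih

end NestedAux
namespace NestedAux

open RTree

variable {n : ℕ}

lemma ins : ∀ N : ℕ, ∀ vs us : List (RTree (Fin n → Bool)),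
    rsize (RTree.node vs) + rsize (RTree.node us) ≤ N →
    (RTree.node vs).atMostOneInternalChild → (RTree.node us).atMostOneInternalChild →
    ChainL ((RTree.node vs).leaves ++ (RTree.node us).leaves) →
    hw (orv (RTree.node vs).leaves) ≤ hw (orv (RTree.node us).leaves) →
    ∃ ws : List (RTree (Fin n → Bool)),
      (RTree.node ws).atMostOneInternalChild ∧
      (RTree.node ws).leaves.Perm ((RTree.node vs).leaves ++ (RTree.node us).leaves) ∧
      (RTree.node ws).cost ≤ (RTree.node vs).cost + (RTree.node us).cost
        + hw (orv (RTree.node us).leaves) := by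
  intro N
  induction N using Nat.strong_induction_on with
  | _ N IH =>
  intro vs us hsz h1 h2 hch hhw
  simp only [leaves_node] at hch hhw ⊢
  have hv : vle (orv ((vs.map leaves).flatten)) (orv ((us.map leaves).flatten)) :=
    vle_orv_of_hw_le hch hhw
  have horv : orv ((vs.map leaves).flatten ++ (us.map leaves).flatten)
      = orv ((us.map leaves).flatten) := orv_append_eq_right hv
  obtain ⟨hcnt, hamo⟩ := amo_node.1 h2
  rcases hfil : us.filter (fun c => !c.isLeaf) with _ | ⟨c, rest⟩
  · -- no internal child of `node us`: attach directly
    refine ⟨RTree.node vs :: us, ?_, ?_, ?_⟩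
    · refine amo_node.2 ⟨?_, ?_⟩
      · have h0 : us.countP (fun c => !c.isLeaf) = 0 := by
          rw [List.countP_eq_length_filter, hfil]; rfl
        simp [List.countP_cons, h0, isLeaf_node]
      · intro c hc
        rcases List.mem_cons.1 hc with rfl | hc
        · exact h1
        · exact hamo c hc
    · simp
    · rw [cost_node (RTree.node vs :: us)]
      have hflat : ((RTree.node vs :: us).map leaves).flatten
          = (vs.map leaves).flatten ++ (us.map leaves).flatten := by simp
      rw [hflat, horv]
      simp only [List.map_cons, List.sum_cons, List.length_cons]
      have hexp : hw (orv ((us.map leaves).flatten)) * (us.length + 1)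
          = hw (orv ((us.map leaves).flatten)) * us.length
            + hw (orv ((us.map leaves).flatten)) := by ring
      rw [hexp]
      have hc2 : (RTree.node us).cost = hw (orv ((us.map leaves).flatten)) * us.length
          + (us.map cost).sum := cost_node us
      omega
  · -- unique internal child c
    have hcrest : rest = [] := by
      have hlen : (us.filter (fun c => !c.isLeaf)).length ≤ 1 := by
        rwa [← List.countP_eq_length_filter]
      rw [hfil] at hlen
      simp at hlen
      exact hlen
    subst hcrest
    have hmemf : c ∈ us.filter (fun c => !c.isLeaf) := by
      rw [hfil]; exact List.mem_singleton_self c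
    have hcmem : c ∈ us := List.mem_of_mem_filter hmemf
    have hcint : (!c.isLeaf) = true := (List.mem_filter.1 hmemf).2
    obtain ⟨cs, rfl⟩ : ∃ cs, c = RTree.node cs := by
      cases c with
      | leaf a => simp [isLeaf_leaf] at hcint
      | node cs => exact ⟨cs, rfl⟩
    obtain ⟨as, bs, rfl⟩ : ∃ as bs, us = as ++ RTree.node cs :: bs := by
      obtain ⟨as, bs, h⟩ := List.append_of_mem hcmem
      exact ⟨as, bs, h⟩
    set us := as ++ RTree.node cs :: bs with hus
    set er := as ++ bs with her
    have hperm_us : us.Perm (RTree.node cs :: er) := List.perm_middle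
    have hcnt2 : as.countP (fun c => !c.isLeaf) = 0 ∧ bs.countP (fun c => !c.isLeaf) = 0 := by
      have h := hcnt
      rw [hus, List.countP_append, List.countP_cons] at h
      simp only [isLeaf_node, Bool.not_false, if_true] at h
      constructor <;> omega
    have hcnt_er : er.countP (fun c => !c.isLeaf) = 0 := by
      rw [her, List.countP_append]
      omega
    have hl₂perm : ((us.map leaves).flatten).Perm
        ((cs.map leaves).flatten ++ (er.map leaves).flatten) := by
      have h := (hperm_us.map leaves).flatten
      simpa using h
    have hlcsub : ∀ y ∈ (cs.map leaves).flatten, y ∈ (us.map leaves).flatten := by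
      intro y hy
      have : y ∈ (RTree.node cs).leaves := by simpa using hy
      exact mem_flatten_leaves hcmem this
    have hzc : vle (orv ((cs.map leaves).flatten)) (orv ((us.map leaves).flatten)) :=
      orv_mono_subset hlcsub
    have hszc : rsize (RTree.node cs) < rsize (RTree.node us) := rsize_lt_of_mem hcmem
    have hamoc : (RTree.node cs).atMostOneInternalChild := hamo _ hcmem
    have key : ∃ ws' : List (RTree (Fin n → Bool)),
        (RTree.node ws').atMostOneInternalChild ∧
        ((ws'.map leaves).flatten).Perm ((vs.map leaves).flatten ++ (cs.map leaves).flatten) ∧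
        (RTree.node ws').cost ≤ (RTree.node vs).cost + (RTree.node cs).cost
          + hw (orv ((us.map leaves).flatten)) := by
      rcases le_total (hw (orv ((vs.map leaves).flatten))) (hw (orv ((cs.map leaves).flatten)))
        with hcase | hcase
      · have hch' : ChainL ((RTree.node vs).leaves ++ (RTree.node cs).leaves) := by
          apply chain_subset _ hch
          intro y hy
          simp only [leaves_node] at hy
          rcases List.mem_append.1 hy with hy | hy
          · exact List.mem_append_left _ hy
          · exact List.mem_append_right _ (hlcsub y hy)
        obtain ⟨ws', ha, hp, hc⟩ := IH (rsize (RTree.node vs) + rsize (RTree.node cs))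
          (by omega) vs cs le_rfl h1 hamoc hch' (by simpa using hcase)
        refine ⟨ws', ha, by simpa using hp, ?_⟩
        have h3 := hw_mono hzc
        simp only [leaves_node] at hc
        omega
      · have hch' : ChainL ((RTree.node cs).leaves ++ (RTree.node vs).leaves) := by
          apply chain_subset _ hch
          intro y hy
          simp only [leaves_node] at hy
          rcases List.mem_append.1 hy with hy | hy
          · exact List.mem_append_right _ (hlcsub y hy)
          · exact List.mem_append_left _ hy
        obtain ⟨ws', ha, hp, hc⟩ := IH (rsize (RTree.node cs) + rsize (RTree.node vs))
          (by omega) cs vs le_rfl hamoc h1 hch' (by simpa using hcase)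
        refine ⟨ws', ha, ?_, ?_⟩
        · simp only [leaves_node] at hp
          exact hp.trans List.perm_append_comm
        · simp only [leaves_node] at hc
          omega
    obtain ⟨ws', hA, hP, hC⟩ := key
    have hpermleaves : (((RTree.node ws' :: er).map leaves).flatten).Perm
        ((vs.map leaves).flatten ++ (us.map leaves).flatten) := by
      rw [List.map_cons, List.flatten_cons]
      simp only [leaves_node]
      refine (hP.append_right _).trans ?_
      rw [List.append_assoc]
      exact (hl₂perm.symm).append_left _
    refine ⟨RTree.node ws' :: er, ?_, ?_, ?_⟩
    · refine amo_node.2 ⟨?_, ?_⟩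
      · simp [List.countP_cons, hcnt_er, isLeaf_node]
      · intro c hc
        rcases List.mem_cons.1 hc with rfl | hc
        · exact hA
        · refine hamo c ?_
          rw [her] at hc
          rcases List.mem_append.1 hc with hc | hc
          · exact List.mem_append_left _ hc
          · exact List.mem_append_right _ (List.mem_cons_of_mem _ hc)
    · simpa using hpermleaves
    · rw [cost_node]
      rw [orv_perm hpermleaves, horv]
      have hlens : er.length + 1 = us.length := by
        rw [her, hus]; simp; omega
      have hsum : (us.map cost).sum = (RTree.node cs).cost + (er.map cost).sum := by
        have h := (hperm_us.map cost).sum_eq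
        simpa using h
      have hc2 : (RTree.node us).cost = hw (orv ((us.map leaves).flatten)) * us.length
          + (us.map cost).sum := cost_node us
      simp only [List.map_cons, List.sum_cons, List.length_cons]
      rw [hlens]
      omega

end NestedAux
namespace NestedAux

open RTree

variable {n : ℕ}

lemma mergeAll : ∀ l : List (RTree (Fin n → Bool)), l ≠ [] →
    (∀ c ∈ l, c.atMostOneInternalChild ∧ c.isLeaf = false) →
    ChainL ((l.map leaves).flatten) →
    ∃ u : RTree (Fin n → Bool), u.isLeaf = false ∧ u.atMostOneInternalChild ∧
      u.leaves.Perm ((l.map leaves).flatten) ∧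
      u.cost ≤ (l.map cost).sum + (l.length - 1) * hw (orv ((l.map leaves).flatten)) := by
  intro l
  induction l with
  | nil => intro h; exact absurd rfl h
  | cons a l ih =>
    intro _ hprop hch
    rcases eq_or_ne l [] with rfl | hl
    · refine ⟨a, (hprop a (by simp)).2, (hprop a (by simp)).1, by simp, by simp⟩
    · obtain ⟨u, hu1, hu2, hu3, hu4⟩ := ih hl (fun c hc => hprop c (List.mem_cons_of_mem _ hc))
        (chain_subset (fun y hy => by
          simp only [List.map_cons, List.flatten_cons]
          exact List.mem_append_right _ hy) hch)
    -- a and u are both internal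
      obtain ⟨vs, rfl⟩ : ∃ vs, a = RTree.node vs := by
        have := (hprop a (by simp)).2
        cases a with
        | leaf x => simp at this
        | node vs => exact ⟨vs, rfl⟩
      obtain ⟨us, rfl⟩ : ∃ us, u = RTree.node us := by
        cases u with
        | leaf x => simp at hu1
        | node us => exact ⟨us, rfl⟩
      have hflat : (((RTree.node vs) :: l).map leaves).flatten
          = (vs.map leaves).flatten ++ (l.map leaves).flatten := by simp
      have hH1 : hw (orv ((vs.map leaves).flatten))
          ≤ hw (orv ((((RTree.node vs) :: l).map leaves).flatten)) := by
        apply hw_mono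
        apply orv_mono_subset
        intro y hy
        rw [hflat]; exact List.mem_append_left _ hy
      have hH2 : hw (orv ((l.map leaves).flatten))
          ≤ hw (orv ((((RTree.node vs) :: l).map leaves).flatten)) := by
        apply hw_mono
        apply orv_mono_subset
        intro y hy
        rw [hflat]; exact List.mem_append_right _ hy
      have huperm : (us.map leaves).flatten.Perm ((l.map leaves).flatten) := by
        simpa using hu3
      have hamoa : (RTree.node vs).atMostOneInternalChild := (hprop _ (by simp)).1
      have huH : hw (orv ((us.map leaves).flatten)) = hw (orv ((l.map leaves).flatten)) := by
        rw [orv_perm huperm]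
      set K := hw (orv ((((RTree.node vs) :: l).map leaves).flatten)) with hK
      have hchau : ChainL ((RTree.node vs).leaves ++ (RTree.node us).leaves) := by
        apply chain_subset _ hch
        intro y hy
        simp only [leaves_node] at hy
        rw [hflat]
        rcases List.mem_append.1 hy with hy | hy
        · exact List.mem_append_left _ hy
        · exact List.mem_append_right _ (huperm.mem_iff.1 hy)
      have hchua : ChainL ((RTree.node us).leaves ++ (RTree.node vs).leaves) := by
        apply chain_subset _ hch
        intro y hy
        simp only [leaves_node] at hy
        rw [hflat]
        rcases List.mem_append.1 hy with hy | hy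
        · exact List.mem_append_right _ (huperm.mem_iff.1 hy)
        · exact List.mem_append_left _ hy
      have hlpos : 1 ≤ l.length := List.length_pos_iff.2 hl
      have harith : (l.length - 1) * K + K = l.length * K := by
        have : l.length - 1 + 1 = l.length := by omega
        calc (l.length - 1) * K + K = (l.length - 1 + 1) * K := by ring
          _ = l.length * K := by rw [this]
      rcases le_total (hw (orv ((vs.map leaves).flatten))) (hw (orv ((us.map leaves).flatten)))
        with hcase | hcase
      · obtain ⟨ws, hw1, hw2, hw3⟩ := ins (rsize (RTree.node vs) + rsize (RTree.node us))
          vs us le_rfl hamoa hu2 hchau (by simpa using hcase)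
        refine ⟨RTree.node ws, by simp, hw1, ?_, ?_⟩
        · simp only [leaves_node] at hw2 ⊢
          rw [hflat]
          exact hw2.trans (huperm.append_left _)
        · simp only [leaves_node] at hw3
          have hb1 : hw (orv ((us.map leaves).flatten)) ≤ K := by rw [huH]; exact hH2
          have hb2 : (RTree.node us).cost ≤ (l.map cost).sum + (l.length - 1) * K := by
            refine hu4.trans ?_
            have := Nat.mul_le_mul_left (l.length - 1) hH2
            omega
          simp only [List.map_cons, List.sum_cons, List.length_cons]
          have : l.length + 1 - 1 = l.length := by omega
          rw [this]
          have hKle : (RTree.node ws).cost ≤ (RTree.node vs).cost + (RTree.node us).cost + K := by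
            omega
          calc (RTree.node ws).cost ≤ (RTree.node vs).cost + (RTree.node us).cost + K := hKle
            _ ≤ (RTree.node vs).cost + ((l.map cost).sum + (l.length - 1) * K) + K := by omega
            _ = (RTree.node vs).cost + (l.map cost).sum + ((l.length - 1) * K + K) := by ring
            _ = (RTree.node vs).cost + (l.map cost).sum + l.length * K := by rw [harith]
      · obtain ⟨ws, hw1, hw2, hw3⟩ := ins (rsize (RTree.node us) + rsize (RTree.node vs))
          us vs le_rfl hu2 hamoa hchua (by simpa using hcase)
        refine ⟨RTree.node ws, by simp, hw1, ?_, ?_⟩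
        · simp only [leaves_node] at hw2 ⊢
          rw [hflat]
          refine hw2.trans ?_
          refine ((huperm.append_right _).trans List.perm_append_comm)
        · simp only [leaves_node] at hw3
          have hb1 : hw (orv ((vs.map leaves).flatten)) ≤ K := hH1
          have hb2 : (RTree.node us).cost ≤ (l.map cost).sum + (l.length - 1) * K := by
            refine hu4.trans ?_
            have := Nat.mul_le_mul_left (l.length - 1) hH2
            omega
          simp only [List.map_cons, List.sum_cons, List.length_cons]
          have : l.length + 1 - 1 = l.length := by omega
          rw [this]
          have hKle : (RTree.node ws).cost ≤ (RTree.node us).cost + (RTree.node vs).cost + K := by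
            omega
          calc (RTree.node ws).cost ≤ (RTree.node us).cost + (RTree.node vs).cost + K := hKle
            _ ≤ ((l.map cost).sum + (l.length - 1) * K) + (RTree.node vs).cost + K := by omega
            _ = (RTree.node vs).cost + (l.map cost).sum + ((l.length - 1) * K + K) := by ring
            _ = (RTree.node vs).cost + (l.map cost).sum + l.length * K := by rw [harith]

end NestedAux
namespace NestedAux

open RTree

variable {n : ℕ}

lemma children_transform {ts : List (RTree (Fin n → Bool))}
    (h : ∀ c ∈ ts, ∃ c' : RTree (Fin n → Bool), c'.leaves.Perm c.leaves ∧ c'.atMostOneInternalChild ∧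
      c'.cost ≤ c.cost ∧ c'.isLeaf = c.isLeaf) :
    ∃ ts' : List (RTree (Fin n → Bool)), ts'.length = ts.length ∧
      ((ts'.map leaves).flatten).Perm ((ts.map leaves).flatten) ∧
      (ts'.map cost).sum ≤ (ts.map cost).sum ∧
      (∀ c ∈ ts', c.atMostOneInternalChild) := by
  induction ts with
  | nil => exact ⟨[], by simp, by simp, by simp, by simp⟩
  | cons a l ih =>
    obtain ⟨a', h1, h2, h3, _⟩ := h a (by simp)
    obtain ⟨l', g1, g2, g3, g4⟩ := ih (fun c hc => h c (List.mem_cons_of_mem _ hc))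
    refine ⟨a' :: l', by simp [g1], by simpa using h1.append g2, ?_, ?_⟩
    · simp only [List.map_cons, List.sum_cons]
      omega
    · intro c hc
      rcases List.mem_cons.1 hc with rfl | hc
      · exact h2
      · exact g4 c hc

lemma main : ∀ N : ℕ, ∀ t : RTree (Fin n → Bool), rsize t ≤ N → ChainL t.leaves →
    ∃ t' : RTree (Fin n → Bool), t'.leaves.Perm t.leaves ∧ t'.atMostOneInternalChild ∧
      t'.cost ≤ t.cost ∧ t'.isLeaf = t.isLeaf := by
  intro N
  induction N using Nat.strong_induction_on with
  | _ N IH =>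
  intro t hsz hch
  cases t with
  | leaf a => exact ⟨RTree.leaf a, List.Perm.refl _, amo_leaf a, le_rfl, rfl⟩
  | node ts =>
    have hchild : ∀ c ∈ ts, ∃ c' : RTree (Fin n → Bool), c'.leaves.Perm c.leaves ∧ c'.atMostOneInternalChild ∧
        c'.cost ≤ c.cost ∧ c'.isLeaf = c.isLeaf := by
      intro c hc
      have hlt : rsize c < rsize (RTree.node ts) := rsize_lt_of_mem hc
      refine IH (rsize c) (by omega) c le_rfl ?_
      refine chain_subset ?_ hch
      intro y hy
      rw [leaves_node]
      exact mem_flatten_leaves hc hy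
    obtain ⟨ts', g1, g2, g3, g4⟩ := children_transform hchild
    set ints := ts'.filter (fun c => !c.isLeaf) with hints
    set lvs := ts'.filter (fun c => c.isLeaf) with hlvs
    have hpart : (lvs ++ ints).Perm ts' := List.filter_append_perm _ ts'
    have hflatperm : (((lvs ++ ints).map leaves).flatten).Perm ((ts'.map leaves).flatten) :=
      (hpart.map leaves).flatten
    have hsumperm : ((lvs ++ ints).map cost).sum = (ts'.map cost).sum :=
      (hpart.map cost).sum_eq
    have hlensum : lvs.length + ints.length = ts'.length := by
      have := hpart.length_eq
      simpa using this
    rcases le_or_gt ints.length 1 with hk | hk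
    · -- at most one internal child already
      refine ⟨RTree.node ts', ?_, ?_, ?_, rfl⟩
      · simpa using g2
      · refine amo_node.2 ⟨?_, g4⟩
        rw [List.countP_eq_length_filter]
        exact hk
      · rw [cost_node, cost_node]
        rw [orv_perm g2, g1]
        omega
    · -- merge the internal children
      have hintsne : ints ≠ [] := by
        intro h; rw [h] at hk; simp at hk
      have hintsprop : ∀ c ∈ ints, c.atMostOneInternalChild ∧ c.isLeaf = false := by
        intro c hc
        refine ⟨g4 c (List.mem_of_mem_filter hc), ?_⟩
        have := (List.mem_filter.1 hc).2
        simpa using this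
      have hintssub : ∀ y ∈ ((ints.map leaves).flatten), y ∈ (RTree.node ts).leaves := by
        intro y hy
        obtain ⟨L, hL, hyL⟩ := List.mem_flatten.1 hy
        obtain ⟨c, hc, rfl⟩ := List.mem_map.1 hL
        have hcts' : c ∈ ts' := List.mem_of_mem_filter hc
        rw [leaves_node]
        exact g2.subset (mem_flatten_leaves hcts' hyL)
      obtain ⟨u, hu1, hu2, hu3, hu4⟩ := mergeAll ints hintsne hintsprop (by
        have hchts : ChainL ((ts.map leaves).flatten) := by simpa using hch
        refine chain_subset ?_ hchts
        intro y hy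
        have := hintssub y hy
        simpa using this)
      -- the final tree
      have hlvsleaf : ∀ c ∈ lvs, c.isLeaf = true := fun c hc => (List.mem_filter.1 hc).2
      have hfinalleaves : (((lvs ++ [u]).map leaves).flatten).Perm ((ts.map leaves).flatten) := by
        rw [List.map_append, List.flatten_append]
        simp only [List.map_cons, List.map_nil, List.flatten_cons, List.flatten_nil,
          List.append_nil]
        refine (hu3.append_left _).trans ?_
        have : ((lvs.map leaves).flatten ++ (ints.map leaves).flatten)
            = ((lvs ++ ints).map leaves).flatten := by
          rw [List.map_append, List.flatten_append]
        rw [this]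
        exact hflatperm.trans g2
      refine ⟨RTree.node (lvs ++ [u]), by simpa using hfinalleaves, ?_, ?_, rfl⟩
      · refine amo_node.2 ⟨?_, ?_⟩
        · rw [List.countP_append]
          have hz : lvs.countP (fun c => !c.isLeaf) = 0 := by
            rw [List.countP_eq_zero]
            intro c hc
            simp [hlvsleaf c hc]
          rw [hz]
          simp [List.countP_cons, hu1]
        · intro c hc
          rcases List.mem_append.1 hc with hc | hc
          · exact g4 c (List.mem_of_mem_filter hc)
          · rw [List.mem_singleton.1 hc]
            exact hu2
      · -- cost bound
        rw [cost_node, cost_node]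
        rw [orv_perm hfinalleaves]
        set H := hw (orv ((ts.map leaves).flatten)) with hH
        have hHints : hw (orv ((ints.map leaves).flatten)) ≤ H := by
          apply hw_mono
          apply orv_mono_subset
          intro y hy
          have := hintssub y hy
          simpa using this
        have hcu : u.cost ≤ (ints.map cost).sum + (ints.length - 1) * H := by
          refine hu4.trans ?_
          have := Nat.mul_le_mul_left (ints.length - 1) hHints
          omega
        have hsums : ((lvs ++ [u]).map cost).sum = (lvs.map cost).sum + u.cost := by
          simp
        rw [hsums]
        have hlen : (lvs ++ [u]).length = lvs.length + 1 := by simp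
        rw [hlen]
        have hsumlv : (lvs.map cost).sum + (ints.map cost).sum = (ts'.map cost).sum := by
          rw [← hsumperm, List.map_append, List.sum_append]
        obtain ⟨k', hk'⟩ : ∃ k', ints.length = k' + 2 := ⟨ints.length - 2, by omega⟩
        have harith : H * (lvs.length + 1) + (k' + 1) * H = H * (lvs.length + ints.length) := by
          rw [hk']; ring
        have hklen : ints.length - 1 = k' + 1 := by omega
        rw [hklen] at hcu
        have hlen2 : lvs.length + ints.length = ts.length := by rw [hlensum, g1]
        calc H * (lvs.length + 1) + ((lvs.map cost).sum + u.cost)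
            ≤ H * (lvs.length + 1) + ((lvs.map cost).sum + ((ints.map cost).sum + (k' + 1) * H)) := by
              omega
          _ = (H * (lvs.length + 1) + (k' + 1) * H) + ((lvs.map cost).sum + (ints.map cost).sum) := by
              ring
          _ = H * (lvs.length + ints.length) + (ts'.map cost).sum := by rw [harith, hsumlv]
          _ = H * ts.length + (ts'.map cost).sum := by rw [hlen2]
          _ ≤ H * ts.length + (ts.map cost).sum := by omega

end NestedAux
/-- Nested (Matryoshka) multi-label case: if the leaf-label columns are nested,
`ẏ₁ ≤ ẏ₂ ≤ … ≤ ẏ_m` coordinatewise, then there exists a cost-optimal tree in which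
every node has at most one internal child. -/
theorem stmt_15 (n : ℕ) (ys : List (Fin n → Bool)) (hne : ys ≠ [])
    (hnested : List.Pairwise (fun a b : Fin n → Bool => ∀ i, a i = true → b i = true) ys) :
    ∃ topt : RTree (Fin n → Bool), topt.leaves.Perm ys ∧
      topt.atMostOneInternalChild ∧
      ∀ t : RTree (Fin n → Bool), t.leaves.Perm ys → topt.cost ≤ t.cost := by
  classical
  open NestedAux in
  -- the chain property for ys
  have hch : ChainL ys := by
    intro a ha b hb
    rcases eq_or_ne a b with rfl | hab
    · exact Or.inl (vle_refl a)
    · have hsym : Symmetric (fun a b : Fin n → Bool => vle a b ∨ vle b a) :=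
        fun _ _ h => h.symm
      have hpw : ys.Pairwise (fun a b : Fin n → Bool => vle a b ∨ vle b a) :=
        hnested.imp (fun h => Or.inl h)
      haveI : Std.Symm (fun a b : Fin n → Bool => vle a b ∨ vle b a) := ⟨fun _ _ h => hsym h⟩
      exact hpw.forall ha hb hab
  -- there is at least one tree with the right leaves
  have hex : ∃ t : RTree (Fin n → Bool), t.leaves.Perm ys := by
    refine ⟨RTree.node (ys.map RTree.leaf), ?_⟩
    have hgen : ∀ l : List (Fin n → Bool), ((l.map RTree.leaf).map RTree.leaves).flatten = l := by
      intro l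
      induction l with
      | nil => simp
      | cons a l ih => simpa using ih
    simp only [NestedAux.leaves_node, hgen]
    exact List.Perm.refl ys
  -- minimize the cost
  set S : Set ℕ := {c | ∃ t : RTree (Fin n → Bool), t.leaves.Perm ys ∧ t.cost = c} with hS
  have hSne : S.Nonempty := by
    obtain ⟨t, ht⟩ := hex
    exact ⟨t.cost, t, ht, rfl⟩
  obtain ⟨t₀, hp₀, hc₀⟩ := Nat.sInf_mem hSne
  have hch₀ : ChainL t₀.leaves := chain_subset (fun y hy => hp₀.subset hy) hch
  obtain ⟨t', h1, h2, h3, _⟩ := NestedAux.main (NestedAux.rsize t₀) t₀ le_rfl hch₀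
  refine ⟨t', h1.trans hp₀, h2, ?_⟩
  intro t ht
  have hmem : t.cost ∈ S := ⟨t, ht, rfl⟩
  have := Nat.sInf_le hmem
  omega
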